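/- Let a < b, let g : [a,b] → [0,∞) be a P-function that is Lebesgue integrable, and let f : [a,b] → [0,∞) be a Lebesgue integrable (g,P(I))-convex dominated function. Then |(1/(b−a)) ∫_a^b f(x) dx − (1/2) f((a+b)/2)| ≤ (1/(b−a)) ∫_a^b g(x) dx − (1/2) g((a+b)/2). -/

import Mathlib

open MeasureTheory Set

theorem stmt16 (a b : ℝ) (hab : a < b) (f g : ℝ → ℝ)
    (hg0 : ∀ x ∈ Set.Icc a b, 0 ≤ g x)
    (hgconv : ∀ x ∈ Set.Icc a b, ∀ y ∈ Set.Icc a b, ∀ t ∈ Set.Ioo (0:ℝ) 1,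
      g (t * x + (1 - t) * y) ≤ g x + g y)
    (hgint : IntegrableOn g (Set.Icc a b))
    (hf0 : ∀ x ∈ Set.Icc a b, 0 ≤ f x)
    (hfint : IntegrableOn f (Set.Icc a b))
    (hfdom : ∀ x ∈ Set.Icc a b, ∀ y ∈ Set.Icc a b, ∀ t ∈ Set.Ioo (0:ℝ) 1,
      |f x + f y - f (t * x + (1 - t) * y)| ≤
        g x + g y - g (t * x + (1 - t) * y)) :
    |(1 / (b - a)) * ∫ x in a..b, f x - (1 / 2) * f ((a + b) / 2)| ≤
      (1 / (b - a)) * ∫ x in a..b, g x - (1 / 2) * g ((a + b) / 2) := by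
  have hba : (0:ℝ) < b - a := sub_pos.2 hab
  set m : ℝ := (a + b) / 2 with hm
  have hrefl : ∀ x ∈ Icc a b, a + b - x ∈ Icc a b := fun x hx =>
    ⟨by linarith [hx.2], by linarith [hx.1]⟩
  have key : ∀ x ∈ Icc a b, |f x + f (a + b - x) - f m| ≤ g x + g (a + b - x) - g m := by
    intro x hx
    have h := hfdom x hx (a + b - x) (hrefl x hx) (1/2) ⟨by norm_num, by norm_num⟩
    have e : (1/2 : ℝ) * x + (1 - 1/2) * (a + b - x) = m := by rw [hm]; ring
    rwa [e] at h
  have hfI : IntervalIntegrable f volume a b := by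
    rw [intervalIntegrable_iff_integrableOn_Ioc_of_le hab.le]
    exact hfint.mono_set Ioc_subset_Icc_self
  have hgI : IntervalIntegrable g volume a b := by
    rw [intervalIntegrable_iff_integrableOn_Ioc_of_le hab.le]
    exact hgint.mono_set Ioc_subset_Icc_self
  have hfR : IntervalIntegrable (fun x => f (a + b - x)) volume a b := by
    have := hfI.comp_sub_left (a + b)
    simpa using this.symm
  have hgR : IntervalIntegrable (fun x => g (a + b - x)) volume a b := by
    have := hgI.comp_sub_left (a + b)
    simpa using this.symm
  have hF : IntervalIntegrable (fun x => f x + f (a + b - x) - f m) volume a b :=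
    (hfI.add hfR).sub (intervalIntegrable_const)
  have hG : IntervalIntegrable (fun x => g x + g (a + b - x) - g m) volume a b :=
    (hgI.add hgR).sub (intervalIntegrable_const)
  have hbound : |∫ x in a..b, (f x + f (a + b - x) - f m)| ≤
      ∫ x in a..b, (g x + g (a + b - x) - g m) := by
    have h1 : ‖∫ x in a..b, (f x + f (a + b - x) - f m)‖ ≤
        |∫ x in a..b, (g x + g (a + b - x) - g m)| := by
      apply intervalIntegral.norm_integral_le_abs_of_norm_le _ hG
      filter_upwards [ae_restrict_mem measurableSet_uIoc] with t ht
      have ht' : t ∈ Icc a b := by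
        rw [uIoc_of_le hab.le] at ht
        exact Ioc_subset_Icc_self ht
      simpa using key t ht'
    have h2 : (0:ℝ) ≤ ∫ x in a..b, (g x + g (a + b - x) - g m) := by
      apply intervalIntegral.integral_nonneg hab.le
      intro t ht
      have hk := key t ht
      have := abs_nonneg (f t + f (a + b - t) - f m)
      linarith
    rwa [Real.norm_eq_abs, abs_of_nonneg h2] at h1
  have hfrefl : (∫ x in a..b, f (a + b - x)) = ∫ x in a..b, f x := by
    rw [intervalIntegral.integral_comp_sub_left f (a + b)]
    norm_num
  have hgrefl : (∫ x in a..b, g (a + b - x)) = ∫ x in a..b, g x := by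
    rw [intervalIntegral.integral_comp_sub_left g (a + b)]
    norm_num
  have hFe : (∫ x in a..b, (f x + f (a + b - x) - f m)) =
      2 * (∫ x in a..b, f x) - (b - a) * f m := by
    rw [intervalIntegral.integral_sub (hfI.add hfR) intervalIntegrable_const,
      intervalIntegral.integral_add hfI hfR, hfrefl, intervalIntegral.integral_const]
    ring_nf
  have hGe : (∫ x in a..b, (g x + g (a + b - x) - g m)) =
      2 * (∫ x in a..b, g x) - (b - a) * g m := by
    rw [intervalIntegral.integral_sub (hgI.add hgR) intervalIntegrable_const,
      intervalIntegral.integral_add hgI hgR, hgrefl, intervalIntegral.integral_const]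
    ring_nf
  rw [hFe, hGe] at hbound
  have hsF : (∫ x in a..b, (f x - 1 / 2 * f m)) = (∫ x in a..b, f x) - (b - a) * (1 / 2 * f m) := by
    rw [intervalIntegral.integral_sub hfI intervalIntegrable_const,
      intervalIntegral.integral_const, smul_eq_mul]
  have hsG : (∫ x in a..b, (g x - 1 / 2 * g m)) = (∫ x in a..b, g x) - (b - a) * (1 / 2 * g m) := by
    rw [intervalIntegral.integral_sub hgI intervalIntegrable_const,
      intervalIntegral.integral_const, smul_eq_mul]
  rw [hsF, hsG]
  have eL : 1 / (b - a) * ((∫ x in a..b, f x) - (b - a) * (1 / 2 * f m)) =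
      (2 * (∫ x in a..b, f x) - (b - a) * f m) / (2 * (b - a)) := by
    field_simp
  have eR : 1 / (b - a) * ((∫ x in a..b, g x) - (b - a) * (1 / 2 * g m)) =
      (2 * (∫ x in a..b, g x) - (b - a) * g m) / (2 * (b - a)) := by
    field_simp
  rw [eL, eR, abs_div, abs_of_pos (by linarith : (0:ℝ) < 2 * (b - a))]
  gcongr
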